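/- Counterexample in ℝ²: let φ* = χ_F be the indicator of the cone F = {(y₁,y₂) : |y₂| ≤ α y₁} with α ∈ (0,1). Choose y₁ > 0 and ε with (2α/√(1+α²)) y₁ < ε < y₁ √(1+α²), and y = (y₁, α y₁). Then the set ⋃_{‖ȳ - y‖ ≤ ε} ∂φ*(ȳ) equals {λ n₁, λ n₂ : λ ≥ 0} where n₁, n₂ are the (non-proportional) outward normals to the two boundary half-lines of F, and this set is not convex. -/

import Mathlib

noncomputable section
open scoped Classical RealInnerProductSpace

/-- Subdifferential for `EReal`-valued functions on a real inner product space
(the space identified with its dual via the inner product). -/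
def subdiffInner {E : Type*} [NormedAddCommGroup E] [InnerProductSpace ℝ E]
    (ψ : E → EReal) (y : E) : Set E :=
  {x | ∀ z : E, ((⟪x, z - y⟫ : ℝ) : EReal) + ψ y ≤ ψ z}

lemma inner_two (x z : EuclideanSpace ℝ (Fin 2)) :
    (⟪x, z⟫ : ℝ) = x 0 * z 0 + x 1 * z 1 := by
  simp [PiLp.inner_apply, Fin.sum_univ_two, RCLike.inner_apply]; ring

lemma vec0 (s t : ℝ) : ((WithLp.equiv 2 (Fin 2 → ℝ)).symm ![s, t] : EuclideanSpace ℝ (Fin 2)) 0 = s := by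
  rfl

lemma vec1 (s t : ℝ) : ((WithLp.equiv 2 (Fin 2 → ℝ)).symm ![s, t] : EuclideanSpace ℝ (Fin 2)) 1 = t := by
  rfl

set_option maxHeartbeats 1000000 in
theorem cone_counterexample (α : ℝ) (hα : α ∈ Set.Ioo (0 : ℝ) 1)
    (y₁ ε : ℝ) (hy₁ : 0 < y₁)
    (hεl : 2 * α / Real.sqrt (1 + α ^ 2) * y₁ < ε)
    (hεu : ε < y₁ * Real.sqrt (1 + α ^ 2))
    (F : Set (EuclideanSpace ℝ (Fin 2)))
    (hF : F = {v | |v 1| ≤ α * v 0})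
    (φstar : EuclideanSpace ℝ (Fin 2) → EReal)
    (hφstar : ∀ v, φstar v = if v ∈ F then (0 : EReal) else ⊤)
    (y n₁ n₂ : EuclideanSpace ℝ (Fin 2))
    (hy : y 0 = y₁ ∧ y 1 = α * y₁)
    (hn₁ : n₁ 0 = -α ∧ n₁ 1 = 1) (hn₂ : n₂ 0 = -α ∧ n₂ 1 = -1) :
    (⋃ y' ∈ Metric.closedBall y ε, subdiffInner φstar y') =
      {x | ∃ l : ℝ, 0 ≤ l ∧ (x = l • n₁ ∨ x = l • n₂)} ∧
    ¬ Convex ℝ {x : EuclideanSpace ℝ (Fin 2) |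
        ∃ l : ℝ, 0 ≤ l ∧ (x = l • n₁ ∨ x = l • n₂)} := by
  obtain ⟨hα0, hα1⟩ := hα
  obtain ⟨hy0, hy1⟩ := hy
  obtain ⟨hn10, hn11⟩ := hn₁
  obtain ⟨hn20, hn21⟩ := hn₂
  have hα2 : (0:ℝ) < 1 + α ^ 2 := by positivity
  have hsq : 0 < Real.sqrt (1 + α ^ 2) := Real.sqrt_pos.2 hα2
  have hss : Real.sqrt (1 + α ^ 2) * Real.sqrt (1 + α ^ 2) = 1 + α ^ 2 :=
    Real.mul_self_sqrt hα2.le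
  have hε0 : (0:ℝ) < ε := lt_trans (by positivity) hεl
  have hFmem : ∀ v : EuclideanSpace ℝ (Fin 2), v ∈ F ↔ |v 1| ≤ α * v 0 := by
    intro v; rw [hF]; rfl
  have h0F : (0 : EuclideanSpace ℝ (Fin 2)) ∈ F := by
    rw [hFmem]; simp
  have hyF : y ∈ F := by
    rw [hFmem, hy0, hy1, abs_of_nonneg (by positivity)]
  constructor
  · ext x
    simp only [Set.mem_iUnion, Set.mem_setOf_eq, Metric.mem_closedBall, subdiffInner]
    constructor
    · rintro ⟨y', hball, hx⟩
      -- y' ∈ F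
      have hy'F : y' ∈ F := by
        by_contra hne
        have h := hx 0
        rw [hφstar 0, if_pos h0F, hφstar y', if_neg hne, EReal.coe_add_top] at h
        exact absurd h (by simp)
      have hnc : ∀ z ∈ F, x 0 * z 0 + x 1 * z 1 ≤ x 0 * y' 0 + x 1 * y' 1 := by
        intro z hz
        have h := hx z
        rw [hφstar z, if_pos hz, hφstar y', if_pos hy'F, add_zero] at h
        have h' : (⟪x, z - y'⟫ : ℝ) ≤ 0 := by exact_mod_cast h
        rw [inner_sub_right, inner_two, inner_two] at h'
        linarith
      have hy'mem : |y' 1| ≤ α * y' 0 := (hFmem y').1 hy'F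
      -- y' 0 > 0 since 0 is not in the ball
      have hY0pos : 0 < y' 0 := by
        rcases lt_or_ge 0 (y' 0) with h | h
        · exact h
        · exfalso
          have hY0 : y' 0 = 0 := le_antisymm h (by nlinarith [abs_nonneg (y' 1)])
          have hY1 : y' 1 = 0 := by
            have := hy'mem; rw [hY0] at this
            simpa using abs_nonpos_iff.mp (by linarith [this])
          have hd : dist y' y = Real.sqrt (y₁ ^ 2 * (1 + α ^ 2)) := by
            rw [EuclideanSpace.dist_eq, Fin.sum_univ_two, hY0, hY1, hy0, hy1,
              Real.dist_eq, Real.dist_eq, sq_abs, sq_abs]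
            ring_nf
          have hd2 : dist y' y = y₁ * Real.sqrt (1 + α ^ 2) := by
            rw [hd, Real.sqrt_mul (sq_nonneg y₁), Real.sqrt_sq hy₁.le]
          linarith [hball, hd2 ▸ hball]
      -- the two boundary slacks
      have hp : -α * y' 0 + y' 1 ≤ 0 := by have := (abs_le.1 hy'mem).2; linarith
      have hq : -α * y' 0 - y' 1 ≤ 0 := by have := (abs_le.1 hy'mem).1; linarith
      -- c = 0
      have hz2 : (2:ℝ) • y' ∈ F := by
        rw [hFmem]
        have h0 : ((2:ℝ) • y') 0 = 2 * y' 0 := rfl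
        have h1 : ((2:ℝ) • y') 1 = 2 * y' 1 := rfl
        rw [h0, h1, abs_mul, abs_of_nonneg (by norm_num : (0:ℝ) ≤ 2)]
        nlinarith [hy'mem]
      have hc0 : (0:ℝ) ≤ x 0 * y' 0 + x 1 * y' 1 := by
        have := hnc 0 h0F; simpa using this
      have hc1 : x 0 * y' 0 + x 1 * y' 1 ≤ 0 := by
        have h := hnc ((2:ℝ) • y') hz2
        have h0 : ((2:ℝ) • y') 0 = 2 * y' 0 := rfl
        have h1 : ((2:ℝ) • y') 1 = 2 * y' 1 := rfl
        rw [h0, h1] at h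
        linarith
      have hc : x 0 * y' 0 + x 1 * y' 1 = 0 := le_antisymm hc1 hc0
      -- test vectors (1, α) and (1, -α)
      have hv1 : ((WithLp.equiv 2 (Fin 2 → ℝ)).symm ![1, α] : EuclideanSpace ℝ (Fin 2)) ∈ F := by
        rw [hFmem, vec0, vec1, abs_of_nonneg hα0.le]; linarith
      have hv2 : ((WithLp.equiv 2 (Fin 2 → ℝ)).symm ![1, -α] : EuclideanSpace ℝ (Fin 2)) ∈ F := by
        rw [hFmem, vec0, vec1, abs_neg, abs_of_nonneg hα0.le]; linarith
      have hle1 : x 0 + x 1 * α ≤ 0 := by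
        have := hnc _ hv1; rw [vec0, vec1] at this; linarith [hc ▸ this]
      have hle2 : x 0 - x 1 * α ≤ 0 := by
        have := hnc _ hv2; rw [vec0, vec1] at this; nlinarith [hc ▸ this]
      -- a' = α x1 - x0 ≥ 0, b' = -α x1 - x0 ≥ 0
      have ha' : 0 ≤ α * x 1 - x 0 := by linarith
      have hb' : 0 ≤ -(α * x 1) - x 0 := by linarith
      -- a'·p + b'·q = 2 α c = 0
      have hsum : (α * x 1 - x 0) * (-α * y' 0 + y' 1)
          + (-(α * x 1) - x 0) * (-α * y' 0 - y' 1) = 0 := by nlinarith [hc]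
      have hap : (α * x 1 - x 0) * (-α * y' 0 + y' 1) = 0 := by
        have h1 : (α * x 1 - x 0) * (-α * y' 0 + y' 1) ≤ 0 := mul_nonpos_of_nonneg_of_nonpos ha' hp
        have h2 : (-(α * x 1) - x 0) * (-α * y' 0 - y' 1) ≤ 0 := mul_nonpos_of_nonneg_of_nonpos hb' hq
        linarith
      rcases lt_or_eq_of_le hp with hplt | hpeq
      · -- p < 0 ⇒ a' = 0 ⇒ x = (b'/(2α)) • n₂
        have ha0 : α * x 1 - x 0 = 0 := by
          rcases mul_eq_zero.1 hap with h | h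
          · exact h
          · exfalso; exact hplt.ne h
        refine ⟨(-(α * x 1) - x 0) / (2 * α), div_nonneg hb' (by linarith), Or.inr ?_⟩
        ext i
        fin_cases i
        · show x 0 = _ * n₂ 0
          rw [hn20]; field_simp; nlinarith [ha0]
        · show x 1 = _ * n₂ 1
          rw [hn21]; field_simp; nlinarith [ha0]
      · -- p = 0 ⇒ q < 0 ⇒ b' = 0 ⇒ x = (a'/(2α)) • n₁
        have hqlt : -α * y' 0 - y' 1 < 0 := by nlinarith [hpeq]
        have hbq : (-(α * x 1) - x 0) * (-α * y' 0 - y' 1) = 0 := by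
          have h1 : (α * x 1 - x 0) * (-α * y' 0 + y' 1) ≤ 0 :=
            mul_nonpos_of_nonneg_of_nonpos ha' hp
          have h2 : (-(α * x 1) - x 0) * (-α * y' 0 - y' 1) ≤ 0 :=
            mul_nonpos_of_nonneg_of_nonpos hb' hq
          linarith
        have hb0 : -(α * x 1) - x 0 = 0 := by
          rcases mul_eq_zero.1 hbq with h | h
          · exact h
          · exfalso; exact hqlt.ne h
        refine ⟨(α * x 1 - x 0) / (2 * α), div_nonneg ha' (by linarith), Or.inl ?_⟩
        ext i
        fin_cases i
        · show x 0 = _ * n₁ 0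
          rw [hn10]; field_simp; nlinarith [hb0]
        · show x 1 = _ * n₁ 1
          rw [hn11]; field_simp; nlinarith [hb0]
    · rintro ⟨l, hl, hcase | hcase⟩
      · -- x = l • n₁ : take y' = y
        refine ⟨y, by simp [hε0.le], ?_⟩
        intro z
        rw [hφstar y, if_pos hyF, hφstar z, add_zero]
        split_ifs with hz
        · have h' : (⟪x, z - y⟫ : ℝ) ≤ 0 := by
            subst hcase
            rw [real_inner_smul_left, inner_sub_right, inner_two, inner_two,
              hn10, hn11, hy0, hy1]
            have hz' := (abs_le.1 ((hFmem z).1 hz)).2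
            nlinarith
          exact_mod_cast h'
        · exact le_top
      · -- x = l • n₂ : take y' on the other boundary line
        set t : ℝ := y₁ * (1 - α ^ 2) / (1 + α ^ 2) with ht
        have h1mα : (0:ℝ) < 1 - α ^ 2 := by nlinarith
        have ht0 : 0 < t := div_pos (mul_pos hy₁ h1mα) hα2
        set y'' : EuclideanSpace ℝ (Fin 2) :=
          (WithLp.equiv 2 (Fin 2 → ℝ)).symm ![t, -α * t] with hy''
        have hy''0 : y'' 0 = t := vec0 _ _
        have hy''1 : y'' 1 = -α * t := vec1 _ _
        have hy''F : y'' ∈ F := by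
          rw [hFmem, hy''0, hy''1]
          rw [abs_of_nonpos (by nlinarith)]
          nlinarith
        have hdist : dist y'' y ≤ ε := by
          have hd : dist y'' y = Real.sqrt ((t - y₁) ^ 2 + (-α * t - α * y₁) ^ 2) := by
            rw [EuclideanSpace.dist_eq, Fin.sum_univ_two, hy''0, hy''1, hy0, hy1,
              Real.dist_eq, Real.dist_eq, sq_abs, sq_abs]
          rw [hd, show ε = Real.sqrt (ε ^ 2) from (Real.sqrt_sq hε0.le).symm]
          apply Real.sqrt_le_sqrt
          -- (t - y₁)² + α²(t + y₁)² = 4α²y₁²/(1+α²) < ε²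
          have hA : ((t - y₁) ^ 2 + (-α * t - α * y₁) ^ 2) * (1 + α ^ 2)
              = 4 * α ^ 2 * y₁ ^ 2 := by
            rw [ht]; field_simp; ring
          have hL : (2 * α / Real.sqrt (1 + α ^ 2) * y₁)
              * (2 * α / Real.sqrt (1 + α ^ 2) * y₁) * (1 + α ^ 2)
              = 4 * α ^ 2 * y₁ ^ 2 := by
            rw [← hss]; simp only [Real.sqrt_mul_self hsq.le]; field_simp; ring
          have h1 : (2 * α / Real.sqrt (1 + α ^ 2) * y₁)
              * (2 * α / Real.sqrt (1 + α ^ 2) * y₁) < ε * ε :=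
            mul_self_lt_mul_self (by positivity) hεl
          nlinarith [h1, hA, hL, hα2]
        refine ⟨y'', hdist, ?_⟩
        intro z
        rw [hφstar y'', if_pos hy''F, hφstar z, add_zero]
        split_ifs with hz
        · have h' : (⟪x, z - y''⟫ : ℝ) ≤ 0 := by
            subst hcase
            rw [real_inner_smul_left, inner_sub_right, inner_two, inner_two,
              hn20, hn21, hy''0, hy''1]
            have hz' := (abs_le.1 ((hFmem z).1 hz)).1
            nlinarith
          exact_mod_cast h'
        · exact le_top
  · -- non-convexity
    intro hconv
    have h1 : n₁ ∈ {x : EuclideanSpace ℝ (Fin 2) |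
        ∃ l : ℝ, 0 ≤ l ∧ (x = l • n₁ ∨ x = l • n₂)} :=
      ⟨1, zero_le_one, Or.inl (one_smul ℝ n₁).symm⟩
    have h2 : n₂ ∈ {x : EuclideanSpace ℝ (Fin 2) |
        ∃ l : ℝ, 0 ≤ l ∧ (x = l • n₁ ∨ x = l • n₂)} :=
      ⟨1, zero_le_one, Or.inr (one_smul ℝ n₂).symm⟩
    have hmid := hconv h1 h2 (by norm_num : (0:ℝ) ≤ 1/2) (by norm_num : (0:ℝ) ≤ 1/2)
      (by norm_num)
    obtain ⟨l, hl, hcase | hcase⟩ := hmid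
    · have e1 := congrArg (fun v : EuclideanSpace ℝ (Fin 2) => v 1) hcase
      have e0 := congrArg (fun v : EuclideanSpace ℝ (Fin 2) => v 0) hcase
      simp only [PiLp.add_apply, PiLp.smul_apply, smul_eq_mul, hn10, hn11, hn20, hn21] at e0 e1
      nlinarith [e0, e1]
    · have e1 := congrArg (fun v : EuclideanSpace ℝ (Fin 2) => v 1) hcase
      have e0 := congrArg (fun v : EuclideanSpace ℝ (Fin 2) => v 0) hcase
      simp only [PiLp.add_apply, PiLp.smul_apply, smul_eq_mul, hn10, hn11, hn20, hn21] at e0 e1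
      nlinarith [e0, e1]
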